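/- arXiv:2411.02015 — 2 statements merged into one kernel-verified Lean document; each statement's English description precedes it below -/
import Mathlib

section
/- Let H be a real Hilbert space and N a closed linear subspace of H. Let E : H → H be a bounded linear idempotent self-adjoint 'expectation' operator whose range is contained in N (i.e., E = E∘E, E is self-adjoint, and E(x) ∈ N for all x). For r > 0, α ≥ 0, and z ∈ H, the proximal operator of the function ψ(x) = (α/2)‖x − E(x)‖² + i_N(x) (indicator of N) with parameter 1/r is given explicitly by prox_{ψ/r}(z) = (α·E(z) + r·Proj_N(z)) / (r + α), where Proj_N is the orthogonal projection onto N. -/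
open RealInnerProductSpace
/-- explicit formula for the proximal operator of
`ψ(x) = (α/2)‖x − E x‖² + i_N(x)` with parameter `1/r`:
`prox_{ψ/r}(z) = (α·E z + r·Proj_N z)/(r+α)`, i.e. this point lies in `N`,
minimizes `x ↦ (α/2)‖x − E x‖² + (r/2)‖x − z‖²` over `N`, and is the unique
such minimizer. -/
theorem vppha_prox_formula
    {H : Type*} [NormedAddCommGroup H] [InnerProductSpace ℝ H] [CompleteSpace H]
    (N : Submodule ℝ H) [CompleteSpace N]
    (E : H →L[ℝ] H)
    (hE_idem : ∀ x, E (E x) = E x)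
    (hE_sa : ∀ x y, ⟪E x, y⟫ = ⟪x, E y⟫)
    (hE_range : ∀ x, E x ∈ N)
    (r α : ℝ) (hr : 0 < r) (hα : 0 ≤ α) (z : H) :
    ((r + α)⁻¹ • (α • E z + r • (N.orthogonalProjectionOnto z : H)) ∈ N) ∧
    IsMinOn (fun x : H => (α / 2) * ‖x - E x‖ ^ 2 + (r / 2) * ‖x - z‖ ^ 2)
      (N : Set H) ((r + α)⁻¹ • (α • E z + r • (N.orthogonalProjectionOnto z : H))) ∧
    (∀ q ∈ N,
      IsMinOn (fun x : H => (α / 2) * ‖x - E x‖ ^ 2 + (r / 2) * ‖x - z‖ ^ 2)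
        (N : Set H) q →
      q = (r + α)⁻¹ • (α • E z + r • (N.orthogonalProjectionOnto z : H))) := by
  have hra : r + α ≠ 0 := by positivity
  set P : H := (N.orthogonalProjectionOnto z : H) with hPdef
  set p : H := (r + α)⁻¹ • (α • E z + r • P) with hp
  have hpN : p ∈ N := N.smul_mem _ (N.add_mem (N.smul_mem _ (hE_range z))
    (N.smul_mem _ (Submodule.coe_mem _)))
  -- orthogonality of P - z to N
  have orth : ∀ w ∈ N, ⟪P - z, w⟫ = 0 := by
    intro w hw
    have h1 : z - P ∈ Nᗮ := by
      have := N.sub_starProjection_mem_orthogonal z; rwa [Submodule.starProjection_apply] at this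
    have h2 : ⟪z - P, w⟫ = 0 := (Submodule.mem_orthogonal' N (z - P)).mp h1 w hw
    have : P - z = -(z - P) := by abel
    rw [this, inner_neg_left, h2, neg_zero]
  have hEP : E P = E z := by
    apply ext_inner_right ℝ
    intro y
    have h3 : ⟪P - z, E y⟫ = 0 := orth (E y) (hE_range y)
    rw [inner_sub_left] at h3
    rw [hE_sa, hE_sa]
    linarith
  have hEp : E p = E z := by
    have h1 : E p = (r + α)⁻¹ • (α • E (E z) + r • E P) := by
      rw [hp, map_smul, map_add, map_smul, map_smul]
    rw [hE_idem, hEP, ← add_smul, add_comm α r, smul_smul, inv_mul_cancel₀ hra,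
      one_smul] at h1
    exact h1
  have hsum : α • (p - E p) + r • (p - z) = r • (P - z) := by
    have h1 : (r + α) • p = α • E z + r • P := by
      rw [hp, smul_smul, mul_inv_cancel₀ hra, one_smul]
    have h2 : α • p + r • p = α • E z + r • P := by
      rw [← add_smul, add_comm α r]; exact h1
    rw [hEp]
    calc α • (p - E z) + r • (p - z)
        = (α • p + r • p) - α • E z - r • z := by
          rw [smul_sub, smul_sub]; abel
      _ = (α • E z + r • P) - α • E z - r • z := by rw [h2]
      _ = r • (P - z) := by rw [smul_sub]; abel
  -- key expansion
  have key : ∀ x ∈ N, (α / 2) * ‖x - E x‖ ^ 2 + (r / 2) * ‖x - z‖ ^ 2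
      = ((α / 2) * ‖p - E p‖ ^ 2 + (r / 2) * ‖p - z‖ ^ 2)
        + (α / 2) * ‖(x - p) - E (x - p)‖ ^ 2 + (r / 2) * ‖x - p‖ ^ 2 := by
    intro x hx
    have hh : x - p ∈ N := N.sub_mem hx hpN
    set h : H := x - p with hdef
    have e1 : x - E x = (p - E p) + (h - E h) := by
      rw [hdef, map_sub]; abel
    have e2 : x - z = (p - z) + h := by rw [hdef]; abel
    have c1 : ⟪p - E p, h - E h⟫ = ⟪p - E p, h⟫ := by
      have hz : ⟪p - E p, E h⟫ = 0 := by
        rw [← hE_sa, map_sub, hE_idem, sub_self, inner_zero_left]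
      rw [inner_sub_right, hz, sub_zero]
    have cross : α * ⟪p - E p, h⟫ + r * ⟪p - z, h⟫ = 0 := by
      rw [← real_inner_smul_left, ← real_inner_smul_left, ← inner_add_left, hsum,
        real_inner_smul_left, orth h hh, mul_zero]
    rw [e1, e2, norm_add_sq_real, norm_add_sq_real, c1]
    ring_nf
    nlinarith [cross]
  have hmin : IsMinOn (fun x : H => (α / 2) * ‖x - E x‖ ^ 2 + (r / 2) * ‖x - z‖ ^ 2)
      (N : Set H) p := by
    intro x hx
    have hk := key x hx
    have h1 : 0 ≤ (α / 2) * ‖(x - p) - E (x - p)‖ ^ 2 := by positivity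
    have h2 : 0 ≤ (r / 2) * ‖x - p‖ ^ 2 := by positivity
    simp only [Set.mem_setOf_eq]
    linarith
  refine ⟨hpN, hmin, ?_⟩
  intro q hq hqmin
  have h1 := hqmin hpN
  have h2 := key q hq
  simp only [Set.mem_setOf_eq] at h1
  have h3 : 0 ≤ (α / 2) * ‖(q - p) - E (q - p)‖ ^ 2 := by positivity
  have h4 : (r / 2) * ‖q - p‖ ^ 2 ≤ 0 := by
    linarith
  have h5 : ‖q - p‖ ^ 2 = 0 := by nlinarith [sq_nonneg ‖q - p‖]
  have h6 : q - p = 0 := by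
    rwa [pow_eq_zero_iff two_ne_zero, norm_eq_zero] at h5
  rw [sub_eq_zero] at h6
  exact h6
end

section
/- Let H be a real Hilbert space, N a closed linear subspace, and E self-adjoint idempotent with range(E) ⊆ N and E(y) = 0 for all y ∈ N⊥. For any z ∈ H, r > 0, α ≥ 0, the unique minimizer x̄ of x ↦ (α/2)‖x − E(x)‖² + (r/2)‖x − z‖² over N satisfies E(x̄) = E(z). -/
open RealInnerProductSpace

/-- the unique minimizer `x̄` over `N` of
`x ↦ (α/2)‖x − E x‖² + (r/2)‖x − z‖²` satisfies `E x̄ = E z`. -/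
theorem vppha_minimizer_mean
    {H : Type*} [NormedAddCommGroup H] [InnerProductSpace ℝ H] [CompleteSpace H]
    (N : Submodule ℝ H) (hN : IsClosed (N : Set H))
    (E : H →L[ℝ] H)
    (hE_idem : ∀ x, E (E x) = E x)
    (hE_sa : ∀ x y, ⟪E x, y⟫ = ⟪x, E y⟫)
    (hE_range : ∀ x, E x ∈ N)
    (hE_orth : ∀ y ∈ Nᗮ, E y = 0)
    (r α : ℝ) (hr : 0 < r) (hα : 0 ≤ α) (z : H)
    (xbar : H) (hx_mem : xbar ∈ N)
    (hx_min : IsMinOn (fun x : H => (α / 2) * ‖x - E x‖ ^ 2 + (r / 2) * ‖x - z‖ ^ 2)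
      (N : Set H) xbar) :
    E xbar = E z := by
  have key : ∀ w : H, ⟪xbar - z, E w⟫ = 0 := by
    intro w
    set v := E w with hv
    have hvN : v ∈ N := hE_range w
    have hEv : E v = v := hE_idem w
    set c : ℝ := ⟪xbar - z, v⟫ with hc
    set d : ℝ := ‖v‖ ^ 2 with hd
    have hd0 : 0 ≤ d := by positivity
    have hq : ∀ t : ℝ, 0 ≤ 2 * t * c + t ^ 2 * d := by
      intro t
      have hmem : xbar + t • v ∈ N := N.add_mem hx_mem (N.smul_mem t hvN)
      have h := isMinOn_iff.mp hx_min _ hmem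
      have hE1 : (xbar + t • v) - E (xbar + t • v) = xbar - E xbar := by
        rw [map_add, map_smul, hEv]; abel
      rw [hE1] at h
      have h2 : xbar + t • v - z = (xbar - z) + t • v := by abel
      rw [h2, norm_add_sq_real] at h
      have h3 : ⟪xbar - z, t • v⟫ = t * c := real_inner_smul_right _ _ _
      have h4 : ‖t • v‖ ^ 2 = t ^ 2 * d := by
        rw [norm_smul, mul_pow, hd, Real.norm_eq_abs, sq_abs]
      rw [h3, h4] at h
      nlinarith
    have hc0 : c = 0 := by
      have hpos : (0:ℝ) < d + 1 := by linarith
      have h := hq (-c / (d + 1))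
      have h2 : 0 ≤ (2 * (-c/(d+1)) * c + (-c/(d+1))^2 * d) * (d+1)^2 :=
        mul_nonneg h (by positivity)
      have h3 : (2 * (-c/(d+1)) * c + (-c/(d+1))^2 * d) * (d+1)^2
          = -2*c^2*(d+1) + c^2*d := by
        field_simp
      rw [h3] at h2
      nlinarith [sq_nonneg c]
    exact hc0
  have key2 : ∀ w : H, ⟪E xbar - E z, w⟫ = 0 := by
    intro w
    have h1 : ⟪E (xbar - z), w⟫ = ⟪xbar - z, E w⟫ := hE_sa _ _
    rw [map_sub] at h1
    rw [h1, key w]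
  have h := key2 (E xbar - E z)
  rw [real_inner_self_eq_norm_sq] at h
  have : E xbar - E z = 0 := by
    have h0 : ‖E xbar - E z‖ ^ 2 = 0 := h
    have h1 : ‖E xbar - E z‖ = 0 := by nlinarith [norm_nonneg (E xbar - E z)]
    exact norm_eq_zero.mp h1
  exact sub_eq_zero.mp this
end
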